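/- Let S ⊆ ℤ² be closed under completing parallelograms, i.e. n1, n2, n3 ∈ S implies n1 − n2 + n3 ∈ S. If a is a solution of the FNLS system on an interval I containing 0 and a_n(0) = 0 for every n ∉ S, then a_n(t) = 0 for every n ∉ S and every t ∈ I. In particular, solutions whose initial data is supported on a sublattice N·ℤ² remain supported on N·ℤ² for all time. -/

import Mathlib

open scoped BigOperators ENNReal NNReal
open Complex

noncomputable section

/-- Frequencies in `ℤ²`. -/
abbrev Z2 : Type := ℤ × ℤ

/-- Squared Euclidean norm `|n|²` on `ℤ²`. -/
def sq2 (n : Z2) : ℤ := n.1 ^ 2 + n.2 ^ 2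

/-- Euclidean dot product on `ℤ²`. -/
def dot2 (m n : Z2) : ℤ := m.1 * n.1 + m.2 * n.2

/-- The resonance factor `ω₄ = |n1|² - |n2|² + |n3|² - |n4|²`. -/
def omega4 (n1 n2 n3 n4 : Z2) : ℤ := sq2 n1 - sq2 n2 + sq2 n3 - sq2 n4

/-- Right-hand side (already multiplied by `i`, i.e. `a_n' = i·(…)`) of the FNLS system
`-i a_n' = -|a_n|² a_n + Σ_{Γ(n)} a_{n1} conj(a_{n2}) a_{n3} e^{i ω₄ t}`. -/
def fnlsRHS (a : Z2 → ℂ) (n : Z2) (t : ℝ) : ℂ :=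
  Complex.I * (-((‖a n‖ : ℂ) ^ 2) * a n +
    ∑' p : Z2 × Z2 × Z2,
      if p.1 - p.2.1 + p.2.2 = n ∧ p.1 ≠ n ∧ p.2.2 ≠ n then
        a p.1 * (starRingEnd ℂ) (a p.2.1) * a p.2.2 *
          Complex.exp (Complex.I * ((omega4 p.1 p.2.1 p.2.2 n : ℤ) : ℂ) * (t : ℂ))
      else 0)

/-- Right-hand side of the `R`-truncated system (interactions with `|ω₄| ≤ R` only). -/
def truncRHS (R : ℕ) (a : Z2 → ℂ) (n : Z2) (t : ℝ) : ℂ :=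
  Complex.I * (-((‖a n‖ : ℂ) ^ 2) * a n +
    ∑' p : Z2 × Z2 × Z2,
      if p.1 - p.2.1 + p.2.2 = n ∧ p.1 ≠ n ∧ p.2.2 ≠ n ∧
          |omega4 p.1 p.2.1 p.2.2 n| ≤ (R : ℤ) then
        a p.1 * (starRingEnd ℂ) (a p.2.1) * a p.2.2 *
          Complex.exp (Complex.I * ((omega4 p.1 p.2.1 p.2.2 n : ℤ) : ℂ) * (t : ℂ))
      else 0)

/-- Right-hand side of the resonant system RFNLS (only `ω₄ = 0` interactions, no phases). -/
def resRHS (a : Z2 → ℂ) (n : Z2) : ℂ :=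
  Complex.I * (-((‖a n‖ : ℂ) ^ 2) * a n +
    ∑' p : Z2 × Z2 × Z2,
      if p.1 - p.2.1 + p.2.2 = n ∧ p.1 ≠ n ∧ p.2.2 ≠ n ∧
          omega4 p.1 p.2.1 p.2.2 n = 0 then
        a p.1 * (starRingEnd ℂ) (a p.2.1) * a p.2.2
      else 0)

/-- `a` is a solution of the FNLS system on the set `I`: absolutely summable values,
locally bounded `ℓ¹` norm, and coordinatewise differentiable satisfying the equation. -/
def IsFNLSSolution (I : Set ℝ) (a : ℝ → Z2 → ℂ) : Prop :=
  (∀ t ∈ I, Summable fun n : Z2 => ‖a t n‖) ∧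
  (∀ t1 ∈ I, ∀ t2 ∈ I, ∃ C : ℝ, ∀ t ∈ Set.Icc t1 t2 ∩ I, (∑' n : Z2, ‖a t n‖) ≤ C) ∧
  (∀ n : Z2, ∀ t ∈ I, HasDerivWithinAt (fun τ => a τ n) (fnlsRHS (a t) n t) I t)

/-- `a` is a solution of the `R`-truncated system on `I`. -/
def IsTruncSolution (R : ℕ) (I : Set ℝ) (a : ℝ → Z2 → ℂ) : Prop :=
  (∀ t ∈ I, Summable fun n : Z2 => ‖a t n‖) ∧
  (∀ t1 ∈ I, ∀ t2 ∈ I, ∃ C : ℝ, ∀ t ∈ Set.Icc t1 t2 ∩ I, (∑' n : Z2, ‖a t n‖) ≤ C) ∧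
  (∀ n : Z2, ∀ t ∈ I, HasDerivWithinAt (fun τ => a τ n) (truncRHS R (a t) n t) I t)

/-- `a` is a solution of the resonant system RFNLS on `I`. -/
def IsRFNLSSolution (I : Set ℝ) (a : ℝ → Z2 → ℂ) : Prop :=
  (∀ t ∈ I, Summable fun n : Z2 => ‖a t n‖) ∧
  (∀ t1 ∈ I, ∀ t2 ∈ I, ∃ C : ℝ, ∀ t ∈ Set.Icc t1 t2 ∩ I, (∑' n : Z2, ‖a t n‖) ≤ C) ∧
  (∀ n : Z2, ∀ t ∈ I, HasDerivWithinAt (fun τ => a τ n) (resRHS (a t) n) I t)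

/-- The square of the `h^s` norm `Σ (1+|n|²)^s |a_n|²`, valued in `ℝ≥0∞`. -/
def hsNormSqE (s : ℝ) (a : Z2 → ℂ) : ℝ≥0∞ :=
  ∑' n : Z2, ENNReal.ofReal ((1 + (sq2 n : ℝ)) ^ s * ‖a n‖ ^ 2)

/-- The toy system with `P` modes `b_1, …, b_P`, with the convention `b_0 = b_{P+1} = 0`. -/
def IsToySolution (P : ℕ) (I : Set ℝ) (b : ℝ → ℕ → ℂ) : Prop :=
  (∀ t ∈ I, b t 0 = 0) ∧
  (∀ t ∈ I, ∀ j : ℕ, P < j → b t j = 0) ∧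
  (∀ j : ℕ, 1 ≤ j → j ≤ P → ∀ t ∈ I,
    HasDerivWithinAt (fun τ => b τ j)
      (Complex.I * (-((‖b t j‖ : ℂ) ^ 2) * b t j
        + 2 * (b t (j + 1)) ^ 2 * (starRingEnd ℂ) (b t j)
        + 2 * (b t (j - 1)) ^ 2 * (starRingEnd ℂ) (b t j))) I t)

/-- `S` satisfies the `R`-closure condition. -/
def RClosed (R : ℕ) (S : Set Z2) : Prop :=
  ∀ n1 n2 n3 : Z2, n1 ∈ S → n2 ∈ S → n3 ∈ S →
    |omega4 n1 n2 n3 (n1 - n2 + n3)| ≤ (R : ℤ) → n1 - n2 + n3 ∈ S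

/-- A rectangle in `ℤ²`: a quadruple of distinct points forming a parallelogram
(`n1 + n3 = n2 + n4`) with `ω₄ = 0`. -/
def IsRectangle (n1 n2 n3 n4 : Z2) : Prop :=
  n1 ≠ n2 ∧ n1 ≠ n3 ∧ n1 ≠ n4 ∧ n2 ≠ n3 ∧ n2 ≠ n4 ∧ n3 ≠ n4 ∧
  n1 + n3 = n2 + n4 ∧ sq2 n1 + sq2 n3 = sq2 n2 + sq2 n4

/-- Closure under completing rectangles: if three vertices of a rectangle lie in `S`,
then so does the fourth. -/
def RectClosed (S : Set Z2) : Prop :=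
  ∀ n1 n2 n3 n4 : Z2, IsRectangle n1 n2 n3 n4 → n1 ∈ S → n2 ∈ S → n3 ∈ S → n4 ∈ S

/-- A nuclear family: a rectangle with parents `n1, n3` in generation `Λ j` and
children `n2, n4` in generation `Λ (j+1)`. -/
def IsNuclearFamily (Λ : ℕ → Finset Z2) (j : ℕ) (n1 n2 n3 n4 : Z2) : Prop :=
  IsRectangle n1 n2 n3 n4 ∧ n1 ∈ Λ j ∧ n3 ∈ Λ j ∧ n2 ∈ Λ (j + 1) ∧ n4 ∈ Λ (j + 1)

/-- Existence and uniqueness (up to trivial permutations) of spouse and children. -/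
def SpouseChildren (Λ : ℕ → Finset Z2) (P : ℕ) : Prop :=
  ∀ j : ℕ, 1 ≤ j → j < P → ∀ n1 ∈ Λ j,
    ∃ n3 n2 n4 : Z2, IsNuclearFamily Λ j n1 n2 n3 n4 ∧
      ∀ n3' n2' n4' : Z2, IsNuclearFamily Λ j n1 n2' n3' n4' →
        n3' = n3 ∧ ((n2' = n2 ∧ n4' = n4) ∨ (n2' = n4 ∧ n4' = n2))

/-- Existence and uniqueness (up to trivial permutations) of sibling and parents. -/
def ParentsSibling (Λ : ℕ → Finset Z2) (P : ℕ) : Prop :=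
  ∀ j : ℕ, 1 ≤ j → j < P → ∀ n2 ∈ Λ (j + 1),
    ∃ n4 n1 n3 : Z2, IsNuclearFamily Λ j n1 n2 n3 n4 ∧
      ∀ n1' n3' n4' : Z2, IsNuclearFamily Λ j n1' n2 n3' n4' →
        n4' = n4 ∧ ((n1' = n1 ∧ n3' = n3) ∨ (n1' = n3 ∧ n3' = n1))

/-- Non-degeneracy: the sibling of a frequency is never equal to its spouse. -/
def NonDegenerate (Λ : ℕ → Finset Z2) : Prop :=
  ∀ j : ℕ, ∀ n1 n2 n3 n4 m2 m3 m4 : Z2,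
    IsNuclearFamily Λ j n1 n2 n3 n4 → IsNuclearFamily Λ (j + 1) n2 m2 m3 m4 → m3 ≠ n4

/-- The union `Λ_1 ∪ … ∪ Λ_P` of all generations. -/
def genFinset (Λ : ℕ → Finset Z2) (P : ℕ) : Finset Z2 := (Finset.Icc 1 P).biUnion Λ

/-- Faithfulness: the only rectangles in `Λ` are (permutations of) nuclear families. -/
def FaithfulGen (Λ : ℕ → Finset Z2) (P : ℕ) : Prop :=
  ∀ n1 n2 n3 n4 : Z2,
    n1 ∈ genFinset Λ P → n2 ∈ genFinset Λ P → n3 ∈ genFinset Λ P → n4 ∈ genFinset Λ P →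
    IsRectangle n1 n2 n3 n4 →
    ∃ j : ℕ, 1 ≤ j ∧ j < P ∧
      ((n1 ∈ Λ j ∧ n3 ∈ Λ j ∧ n2 ∈ Λ (j + 1) ∧ n4 ∈ Λ (j + 1)) ∨
       (n2 ∈ Λ j ∧ n4 ∈ Λ j ∧ n1 ∈ Λ (j + 1) ∧ n3 ∈ Λ (j + 1)))

/-- `S` contains at most one vertex of any rectangle having a vertex at `0`. -/
def NoRectangleWithZero (S : Set Z2) : Prop :=
  ∀ m2 m3 m4 : Z2, IsRectangle 0 m2 m3 m4 →
    ¬(m2 ∈ S ∧ m3 ∈ S) ∧ ¬(m2 ∈ S ∧ m4 ∈ S) ∧ ¬(m3 ∈ S ∧ m4 ∈ S)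

/-- `S1` and `S2` are not connected by any (nondegenerate) parallelogram of
eccentricity `≤ R`. -/
def NotConnected (R : ℕ) (S1 S2 : Set Z2) : Prop :=
  ∀ n1 n2 n3 : Z2,
    ((n1 ∈ S1 ∧ n2 ∈ S1 ∧ n3 ∈ S2) ∨ (n1 ∈ S2 ∧ n2 ∈ S2 ∧ n3 ∈ S1)) →
    (n1 ≠ n2 → n2 ≠ n3 → (R : ℤ) < |omega4 n1 n2 n3 (n1 - n2 + n3)|) ∧
    (n1 ≠ n3 → n3 ≠ n2 → (R : ℤ) < |omega4 n1 n3 n2 (n1 - n3 + n2)|)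

/-- A well-posed continuous dynamical system on a normed space `X`. -/
def IsWellPosedFlow {X : Type*} [NormedAddCommGroup X] (S : ℝ → X → X) : Prop :=
  (∀ x : X, S 0 x = x) ∧
  (∀ t1 t2 : ℝ, ∀ x : X, S (t1 + t2) x = S t1 (S t2 x)) ∧
  (∀ x : X, Continuous fun t : ℝ => S t x) ∧
  (∀ T : ℝ, 0 < T → ∀ x : X, ∀ ε : ℝ, 0 < ε → ∃ δ : ℝ, 0 < δ ∧ ∀ y : X, ‖x - y‖ ≤ δ →
     ∀ t ∈ Set.Icc (-T) T, ‖S t x - S t y‖ ≤ ε)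

/-- `sup_{t > 0} ‖S(t)x‖`, valued in `ℝ≥0∞`. -/
def supOrbitPos {X : Type*} [NormedAddCommGroup X] (S : ℝ → X → X) (x : X) : ℝ≥0∞ :=
  ⨆ t : Set.Ioi (0 : ℝ), (‖S (t : ℝ) x‖₊ : ℝ≥0∞)

/-- `sup_{t ∈ ℝ} ‖S(t)x‖`, valued in `ℝ≥0∞`. -/
def supOrbitAll {X : Type*} [NormedAddCommGroup X] (S : ℝ → X → X) (x : X) : ℝ≥0∞ :=
  ⨆ t : ℝ, (‖S t x‖₊ : ℝ≥0∞)

/-- Long-time strong instability of the flow `S` near `φ`. -/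
def LongTimeStrongInstability {X : Type*} [NormedAddCommGroup X]
    (S : ℝ → X → X) (φ : X) : Prop :=
  ∀ δ : ℝ, 0 < δ → δ < 1 → ∀ K : ℝ, 1 ≤ K →
    ∃ φs : X, ‖φ - φs‖ ≤ δ ∧ ENNReal.ofReal K ≤ supOrbitPos S φs

open MeasureTheory in
private lemma aesm_of_hasSum {ι E : Type*} (e : ℕ ≃ ι) [NormedAddCommGroup E]
    {K : Set ℝ} (hK : MeasurableSet K)
    {f : ι → ℝ → E} (hf : ∀ i, ContinuousOn (f i) K)
    {g : ℝ → E} (hg : ∀ s ∈ K, HasSum (fun i => f i s) (g s)) :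
    AEStronglyMeasurable g (volume.restrict K) := by
  refine aestronglyMeasurable_of_tendsto_ae
    (f := fun k (s : ℝ) => ∑ i ∈ Finset.range k, f (e i) s)
    Filter.atTop (fun k => ?_) ?_
  · exact (continuousOn_finset_sum _ fun i _ => hf (e i)).aestronglyMeasurable hK
  · filter_upwards [ae_restrict_mem hK] with s hs
    exact (e.hasSum_iff.mpr (hg s hs)).tendsto_sum_nat

private lemma tsum_mul_prod {α β : Type*} {g : α → ℝ} {h : β → ℝ}
    (hg : Summable g) (hh : Summable h) (hg0 : ∀ x, 0 ≤ g x) (hh0 : ∀ x, 0 ≤ h x) :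
    ∑' p : α × β, g p.1 * h p.2 = (∑' x, g x) * ∑' y, h y := by
  rw [Summable.tsum_prod' (hg.mul_of_nonneg hh hg0 hh0) fun x => (hh.mul_left (g x))]
  calc ∑' x, ∑' y, g x * h y = ∑' x, g x * ∑' y, h y := by
        congr 1; ext x; exact tsum_mul_left
    _ = _ := tsum_mul_right

private lemma norm_exp_I_int_mul (w : ℤ) (t : ℝ) :
    ‖Complex.exp (Complex.I * (w : ℂ) * (t : ℂ))‖ = 1 := by
  rw [Complex.norm_exp]
  simp [Complex.mul_re, Complex.mul_im]
set_option maxHeartbeats 1000000 in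
private lemma fnls_term_summable (b : Z2 → ℂ) (hb : Summable fun n : Z2 => ‖b n‖)
    (t : ℝ) (n : Z2) :
    Summable fun p : Z2 × Z2 × Z2 =>
      (if p.1 - p.2.1 + p.2.2 = n ∧ p.1 ≠ n ∧ p.2.2 ≠ n then
          b p.1 * (starRingEnd ℂ) (b p.2.1) * b p.2.2 *
            Complex.exp (Complex.I * ((omega4 p.1 p.2.1 p.2.2 n : ℤ) : ℂ) * (t : ℂ))
        else 0) := by
  have hf0 : ∀ m : Z2, (0:ℝ) ≤ ‖b m‖ := fun m => norm_nonneg _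
  have hff : Summable (fun q : Z2 × Z2 => ‖b q.1‖ * ‖b q.2‖) :=
    hb.mul_of_nonneg hb hf0 fun q => hf0 q
  have hff0 : ∀ q : Z2 × Z2, 0 ≤ ‖b q.1‖ * ‖b q.2‖ := fun q => mul_nonneg (hf0 _) (hf0 _)
  have hΦsum : Summable (fun p : Z2 × Z2 × Z2 => ‖b p.1‖ * (‖b p.2.1‖ * ‖b p.2.2‖)) :=
    hb.mul_of_nonneg hff hf0 hff0
  refine Summable.of_norm_bounded hΦsum fun p => ?_
  split_ifs with h
  · rw [norm_mul, norm_mul, norm_mul, norm_exp_I_int_mul, RCLike.norm_conj, mul_one]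
    exact le_of_eq (by ring)
  · rw [norm_zero]; exact mul_nonneg (hf0 _) (hff0 _)
set_option maxHeartbeats 1000000 in
private lemma fnls_sum_bound (S : Set Z2)
    (hS : ∀ n1 n2 n3 : Z2, n1 ∈ S → n2 ∈ S → n3 ∈ S → n1 - n2 + n3 ∈ S)
    (b : Z2 → ℂ) (hb : Summable fun n : Z2 => ‖b n‖) {M : ℝ}
    (hM : (∑' n : Z2, ‖b n‖) ≤ M) (t : ℝ) (A : Finset Z2) (hA : ∀ n ∈ A, n ∉ S) :
    ∑ n ∈ A, ‖fnlsRHS b n t‖ ≤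
      4 * M ^ 2 * ∑' n : Z2, Set.indicator {m : Z2 | m ∉ S} (fun m => ‖b m‖) n := by
  classical
  set f : Z2 → ℝ := fun n => ‖b n‖ with hfdef
  have hf0 : ∀ n, 0 ≤ f n := fun n => norm_nonneg _
  have hT0 : 0 ≤ ∑' n, f n := tsum_nonneg hf0
  have hM0 : 0 ≤ M := le_trans hT0 hM
  set ind : Z2 → ℝ := Set.indicator {m : Z2 | m ∉ S} f with hinddef
  have hind0 : ∀ n, 0 ≤ ind n := fun n => Set.indicator_nonneg (fun m _ => hf0 m) n
  have hind_le : ∀ n, ind n ≤ f n := fun n => Set.indicator_le_self' (fun m _ => hf0 m) n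
  have hind_sum : Summable ind := Summable.of_nonneg_of_le hind0 hind_le hb
  set F : ℝ := ∑' n, ind n with hFdef
  have hF0 : 0 ≤ F := tsum_nonneg hind0
  set Φ : Z2 × Z2 × Z2 → ℝ := fun p => f p.1 * (f p.2.1 * f p.2.2) with hΦdef
  have hff : Summable (fun q : Z2 × Z2 => f q.1 * f q.2) :=
    hb.mul_of_nonneg hb hf0 fun q => hf0 q
  have hff0 : ∀ q : Z2 × Z2, 0 ≤ f q.1 * f q.2 := fun q => mul_nonneg (hf0 _) (hf0 _)
  have hΦsum : Summable Φ := hb.mul_of_nonneg hff hf0 hff0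
  have hΦ0 : ∀ p, 0 ≤ Φ p := fun p => mul_nonneg (hf0 _) (hff0 _)
  set ψ : Z2 × Z2 × Z2 → ℝ :=
    fun p => if p.1 ∉ S ∨ p.2.1 ∉ S ∨ p.2.2 ∉ S then Φ p else 0 with hψdef
  have hψ0 : ∀ p, 0 ≤ ψ p := by
    intro p; rw [hψdef]; dsimp only; split_ifs
    exacts [hΦ0 p, le_refl 0]
  have hψ_le_Φ : ∀ p, ψ p ≤ Φ p := by
    intro p; rw [hψdef]; dsimp only; split_ifs
    exacts [le_refl _, hΦ0 p]
  have hψsum : Summable ψ := Summable.of_nonneg_of_le hψ0 hψ_le_Φ hΦsum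
  -- the three indicator-weighted products
  set ψ1 : Z2 × Z2 × Z2 → ℝ := fun p => ind p.1 * (f p.2.1 * f p.2.2) with hψ1def
  set ψ2 : Z2 × Z2 × Z2 → ℝ := fun p => f p.1 * (ind p.2.1 * f p.2.2) with hψ2def
  set ψ3 : Z2 × Z2 × Z2 → ℝ := fun p => f p.1 * (f p.2.1 * ind p.2.2) with hψ3def
  have h2a : Summable (fun q : Z2 × Z2 => ind q.1 * f q.2) :=
    hind_sum.mul_of_nonneg hb hind0 fun q => hf0 q
  have h3a : Summable (fun q : Z2 × Z2 => f q.1 * ind q.2) :=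
    hb.mul_of_nonneg hind_sum hf0 fun q => hind0 q
  have hψ1sum : Summable ψ1 := hind_sum.mul_of_nonneg hff hind0 hff0
  have hψ2sum : Summable ψ2 :=
    hb.mul_of_nonneg h2a hf0 fun q => mul_nonneg (hind0 _) (hf0 _)
  have hψ3sum : Summable ψ3 :=
    hb.mul_of_nonneg h3a hf0 fun q => mul_nonneg (hf0 _) (hind0 _)
  have hψ_le_sum : ∀ p, ψ p ≤ ψ1 p + ψ2 p + ψ3 p := by
    intro p
    have h1 : 0 ≤ ψ1 p := mul_nonneg (hind0 _) (hff0 _)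
    have h2 : 0 ≤ ψ2 p := mul_nonneg (hf0 _) (mul_nonneg (hind0 _) (hf0 _))
    have h3 : 0 ≤ ψ3 p := mul_nonneg (hf0 _) (mul_nonneg (hf0 _) (hind0 _))
    rw [hψdef]; dsimp only; split_ifs with h
    · rcases h with h | h | h
      · have : ψ1 p = Φ p := by
          rw [hψ1def]; dsimp only
          rw [hinddef, Set.indicator_of_mem (show p.1 ∈ {m : Z2 | m ∉ S} from h) f]
        linarith
      · have : ψ2 p = Φ p := by
          rw [hψ2def]; dsimp only
          rw [hinddef, Set.indicator_of_mem (show p.2.1 ∈ {m : Z2 | m ∉ S} from h) f]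
        linarith
      · have : ψ3 p = Φ p := by
          rw [hψ3def]; dsimp only
          rw [hinddef, Set.indicator_of_mem (show p.2.2 ∈ {m : Z2 | m ∉ S} from h) f]
        linarith
    · linarith
  have hψ_tsum_le : ∑' p, ψ p ≤ 3 * (M ^ 2 * F) := by
    have hTM : ∑' n, f n ≤ M := hM
    have e1 : ∑' p, ψ1 p = F * ((∑' n, f n) * (∑' n, f n)) := by
      rw [hψ1def]
      rw [tsum_mul_prod hind_sum hff hind0 hff0,
        tsum_mul_prod hb hb hf0 hf0]
    have e2 : ∑' p, ψ2 p = (∑' n, f n) * (F * (∑' n, f n)) := by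
      rw [hψ2def]
      rw [tsum_mul_prod hb h2a hf0 (fun q => mul_nonneg (hind0 _) (hf0 _)),
        tsum_mul_prod hind_sum hb hind0 hf0]
    have e3 : ∑' p, ψ3 p = (∑' n, f n) * ((∑' n, f n) * F) := by
      rw [hψ3def]
      rw [tsum_mul_prod hb h3a hf0 (fun q => mul_nonneg (hf0 _) (hind0 _)),
        tsum_mul_prod hb hind_sum hf0 hind0]
    have key : ∀ x y : ℝ, 0 ≤ x → 0 ≤ y → x ≤ M → y ≤ M → x * y ≤ M ^ 2 := by
      intro x y hx hy hxM hyM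
      calc x * y ≤ M * M := mul_le_mul hxM hyM hy hM0
        _ = M ^ 2 := by ring
    calc ∑' p, ψ p ≤ ∑' p, (ψ1 p + ψ2 p + ψ3 p) :=
          Summable.tsum_le_tsum hψ_le_sum hψsum ((hψ1sum.add hψ2sum).add hψ3sum)
      _ = ∑' p, ψ1 p + ∑' p, ψ2 p + ∑' p, ψ3 p := by
          rw [Summable.tsum_add (hψ1sum.add hψ2sum) hψ3sum, Summable.tsum_add hψ1sum hψ2sum]
      _ ≤ M ^ 2 * F + M ^ 2 * F + M ^ 2 * F := by
          have q1 : ∑' p, ψ1 p ≤ M ^ 2 * F := by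
            rw [e1]
            calc F * ((∑' n, f n) * (∑' n, f n)) ≤ F * M ^ 2 :=
                  mul_le_mul_of_nonneg_left (key _ _ hT0 hT0 hTM hTM) hF0
              _ = M ^ 2 * F := by ring
          have q2 : ∑' p, ψ2 p ≤ M ^ 2 * F := by
            rw [e2]
            calc (∑' n, f n) * (F * (∑' n, f n)) = F * ((∑' n, f n) * (∑' n, f n)) := by ring
              _ ≤ F * M ^ 2 := mul_le_mul_of_nonneg_left (key _ _ hT0 hT0 hTM hTM) hF0
              _ = M ^ 2 * F := by ring
          have q3 : ∑' p, ψ3 p ≤ M ^ 2 * F := by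
            rw [e3]
            calc (∑' n, f n) * ((∑' n, f n) * F) = F * ((∑' n, f n) * (∑' n, f n)) := by ring
              _ ≤ F * M ^ 2 := mul_le_mul_of_nonneg_left (key _ _ hT0 hT0 hTM hTM) hF0
              _ = M ^ 2 * F := by ring
          linarith
      _ = 3 * (M ^ 2 * F) := by ring
  -- χ and the termwise bound
  have hχ0 : ∀ (n : Z2) (p : Z2 × Z2 × Z2),
      (0:ℝ) ≤ if p.1 - p.2.1 + p.2.2 = n then ψ p else 0 := by
    intro n p; split_ifs; exacts [hψ0 p, le_refl 0]
  have hχ_le : ∀ (n : Z2) (p : Z2 × Z2 × Z2),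
      (if p.1 - p.2.1 + p.2.2 = n then ψ p else 0) ≤ Φ p := by
    intro n p; split_ifs; exacts [hψ_le_Φ p, hΦ0 p]
  have hχsum : ∀ n : Z2, Summable fun p : Z2 × Z2 × Z2 =>
      (if p.1 - p.2.1 + p.2.2 = n then ψ p else 0) :=
    fun n => Summable.of_nonneg_of_le (hχ0 n) (hχ_le n) hΦsum
  have hterm_norm : ∀ (n : Z2) (p : Z2 × Z2 × Z2),
      ‖b p.1 * (starRingEnd ℂ) (b p.2.1) * b p.2.2 *
          Complex.exp (Complex.I * ((omega4 p.1 p.2.1 p.2.2 n : ℤ) : ℂ) * (t : ℂ))‖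
        = f p.1 * (f p.2.1 * f p.2.2) := by
    intro n p
    rw [norm_mul, norm_mul, norm_mul, norm_exp_I_int_mul, RCLike.norm_conj, mul_one]
    ring
  have hterm_le : ∀ n, n ∉ S → ∀ p : Z2 × Z2 × Z2,
      ‖(if p.1 - p.2.1 + p.2.2 = n ∧ p.1 ≠ n ∧ p.2.2 ≠ n then
          b p.1 * (starRingEnd ℂ) (b p.2.1) * b p.2.2 *
            Complex.exp (Complex.I * ((omega4 p.1 p.2.1 p.2.2 n : ℤ) : ℂ) * (t : ℂ))
        else 0)‖ ≤ (if p.1 - p.2.1 + p.2.2 = n then ψ p else 0) := by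
    intro n hn p
    by_cases h1 : p.1 - p.2.1 + p.2.2 = n ∧ p.1 ≠ n ∧ p.2.2 ≠ n
    · rw [if_pos h1, if_pos h1.1, hterm_norm n p, hψdef]
      dsimp only
      rw [if_pos]
      · by_contra hc
        push_neg at hc
        exact hn (h1.1 ▸ hS _ _ _ hc.1 hc.2.1 hc.2.2)
    · rw [if_neg h1, norm_zero]
      exact hχ0 n p
  have hterm_summ : ∀ n : Z2, Summable fun p : Z2 × Z2 × Z2 =>
      ‖(if p.1 - p.2.1 + p.2.2 = n ∧ p.1 ≠ n ∧ p.2.2 ≠ n then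
          b p.1 * (starRingEnd ℂ) (b p.2.1) * b p.2.2 *
            Complex.exp (Complex.I * ((omega4 p.1 p.2.1 p.2.2 n : ℤ) : ℂ) * (t : ℂ))
        else 0)‖ := by
    intro n
    refine Summable.of_nonneg_of_le (fun p => norm_nonneg _) (fun p => ?_) hΦsum
    by_cases h1 : p.1 - p.2.1 + p.2.2 = n ∧ p.1 ≠ n ∧ p.2.2 ≠ n
    · rw [if_pos h1, hterm_norm n p]
    · rw [if_neg h1, norm_zero]; exact hΦ0 p
  have hfM : ∀ n, f n ≤ M := fun n => le_trans (Summable.le_tsum hb n fun m _ => hf0 m) hM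
  have hn_bound : ∀ n, n ∉ S → ‖fnlsRHS b n t‖ ≤
      M ^ 2 * f n + ∑' p : Z2 × Z2 × Z2, (if p.1 - p.2.1 + p.2.2 = n then ψ p else 0) := by
    intro n hn
    rw [fnlsRHS, norm_mul, Complex.norm_I, one_mul]
    refine (norm_add_le _ _).trans (add_le_add ?_ ?_)
    · rw [norm_mul, norm_neg, norm_pow, Complex.norm_real, Real.norm_eq_abs,
        _root_.abs_of_nonneg (hf0 n)]
      have : f n ^ 2 ≤ M ^ 2 := pow_le_pow_left₀ (hf0 n) (hfM n) 2
      exact mul_le_mul_of_nonneg_right this (hf0 n)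
    · exact (norm_tsum_le_tsum_norm (hterm_summ n)).trans
        (Summable.tsum_le_tsum (hterm_le n hn) (hterm_summ n) (hχsum n))
  -- summing over A
  have hrw : ∀ p : Z2 × Z2 × Z2,
      (∑ n ∈ A, if p.1 - p.2.1 + p.2.2 = n then ψ p else 0)
        = if p.1 - p.2.1 + p.2.2 ∈ A then ψ p else 0 :=
    fun p => Finset.sum_ite_eq A (p.1 - p.2.1 + p.2.2) fun _ => ψ p
  calc ∑ n ∈ A, ‖fnlsRHS b n t‖
      ≤ ∑ n ∈ A, (M ^ 2 * f n +
          ∑' p : Z2 × Z2 × Z2, (if p.1 - p.2.1 + p.2.2 = n then ψ p else 0)) :=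
        Finset.sum_le_sum fun n hn => hn_bound n (hA n hn)
    _ = M ^ 2 * (∑ n ∈ A, f n) +
        ∑ n ∈ A, ∑' p : Z2 × Z2 × Z2, (if p.1 - p.2.1 + p.2.2 = n then ψ p else 0) := by
        rw [Finset.sum_add_distrib, Finset.mul_sum]
    _ ≤ M ^ 2 * F + 3 * (M ^ 2 * F) := by
        refine add_le_add ?_ ?_
        · refine mul_le_mul_of_nonneg_left ?_ (by positivity)
          have : ∑ n ∈ A, f n = ∑ n ∈ A, ind n :=
            Finset.sum_congr rfl fun n hn => (Set.indicator_of_mem (show n ∈ {m : Z2 | m ∉ S} from hA n hn) f).symm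
          rw [this, hFdef]
          exact Summable.sum_le_tsum A (fun n _ => hind0 n) hind_sum
        · rw [← Summable.tsum_finsetSum (fun n _ => hχsum n)]
          have hs2 : Summable fun p : Z2 × Z2 × Z2 =>
              (∑ n ∈ A, if p.1 - p.2.1 + p.2.2 = n then ψ p else 0) := by
            refine Summable.of_nonneg_of_le (fun p => ?_) (fun p => ?_) hΦsum
            · rw [hrw p]; split_ifs; exacts [hψ0 p, le_refl 0]
            · rw [hrw p]; split_ifs; exacts [hψ_le_Φ p, hΦ0 p]
          refine le_trans (Summable.tsum_le_tsum (fun p => ?_) hs2 hψsum) hψ_tsum_le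
          rw [hrw p]; split_ifs; exacts [le_refl _, hψ0 p]
    _ = 4 * M ^ 2 * F := by ring
set_option maxHeartbeats 1000000 in
private lemma fnls_norm_bound (b : Z2 → ℂ) (hb : Summable fun n : Z2 => ‖b n‖) {M : ℝ}
    (hM : (∑' n : Z2, ‖b n‖) ≤ M) (t : ℝ) (n : Z2) :
    ‖fnlsRHS b n t‖ ≤ 2 * M ^ 3 := by
  classical
  set f : Z2 → ℝ := fun n => ‖b n‖ with hfdef
  have hf0 : ∀ n, 0 ≤ f n := fun n => norm_nonneg _
  have hT0 : 0 ≤ ∑' n, f n := tsum_nonneg hf0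
  have hM0 : 0 ≤ M := le_trans hT0 hM
  set Φ : Z2 × Z2 × Z2 → ℝ := fun p => f p.1 * (f p.2.1 * f p.2.2) with hΦdef
  have hff : Summable (fun q : Z2 × Z2 => f q.1 * f q.2) :=
    hb.mul_of_nonneg hb hf0 fun q => hf0 q
  have hff0 : ∀ q : Z2 × Z2, 0 ≤ f q.1 * f q.2 := fun q => mul_nonneg (hf0 _) (hf0 _)
  have hΦsum : Summable Φ := hb.mul_of_nonneg hff hf0 hff0
  have hΦ0 : ∀ p, 0 ≤ Φ p := fun p => mul_nonneg (hf0 _) (hff0 _)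
  have hΦt : ∑' p, Φ p ≤ M ^ 3 := by
    have : ∑' p, Φ p = (∑' n, f n) * ((∑' n, f n) * (∑' n, f n)) := by
      rw [hΦdef, tsum_mul_prod hb hff hf0 hff0, tsum_mul_prod hb hb hf0 hf0]
    rw [this]
    calc (∑' n, f n) * ((∑' n, f n) * (∑' n, f n)) ≤ M * (M * M) := by
          refine mul_le_mul hM (mul_le_mul hM hM hT0 hM0) (mul_nonneg hT0 hT0) hM0
      _ = M ^ 3 := by ring
  have hterm_norm : ∀ p : Z2 × Z2 × Z2,
      ‖b p.1 * (starRingEnd ℂ) (b p.2.1) * b p.2.2 *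
          Complex.exp (Complex.I * ((omega4 p.1 p.2.1 p.2.2 n : ℤ) : ℂ) * (t : ℂ))‖
        = Φ p := by
    intro p
    rw [norm_mul, norm_mul, norm_mul, norm_exp_I_int_mul, RCLike.norm_conj, mul_one, hΦdef]
    dsimp only; ring
  have hterm_le : ∀ p : Z2 × Z2 × Z2,
      ‖(if p.1 - p.2.1 + p.2.2 = n ∧ p.1 ≠ n ∧ p.2.2 ≠ n then
          b p.1 * (starRingEnd ℂ) (b p.2.1) * b p.2.2 *
            Complex.exp (Complex.I * ((omega4 p.1 p.2.1 p.2.2 n : ℤ) : ℂ) * (t : ℂ))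
        else 0)‖ ≤ Φ p := by
    intro p
    split_ifs with h1
    · rw [hterm_norm p]
    · rw [norm_zero]; exact hΦ0 p
  have hterm_summ : Summable fun p : Z2 × Z2 × Z2 =>
      ‖(if p.1 - p.2.1 + p.2.2 = n ∧ p.1 ≠ n ∧ p.2.2 ≠ n then
          b p.1 * (starRingEnd ℂ) (b p.2.1) * b p.2.2 *
            Complex.exp (Complex.I * ((omega4 p.1 p.2.1 p.2.2 n : ℤ) : ℂ) * (t : ℂ))
        else 0)‖ :=
    Summable.of_nonneg_of_le (fun p => norm_nonneg _) hterm_le hΦsum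
  have hfM : ∀ m, f m ≤ M := fun m => le_trans (Summable.le_tsum hb m fun k _ => hf0 k) hM
  rw [fnlsRHS, norm_mul, Complex.norm_I, one_mul]
  refine le_trans (norm_add_le _ _) ?_
  have h1 : ‖-((‖b n‖ : ℂ) ^ 2) * b n‖ ≤ M ^ 3 := by
    rw [norm_mul, norm_neg, norm_pow, Complex.norm_real, Real.norm_eq_abs,
      _root_.abs_of_nonneg (hf0 n)]
    calc f n ^ 2 * f n ≤ M ^ 2 * M :=
          mul_le_mul (pow_le_pow_left₀ (hf0 n) (hfM n) 2) (hfM n) (hf0 n) (by positivity)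
      _ = M ^ 3 := by ring
  have h2 : ‖∑' p : Z2 × Z2 × Z2,
      (if p.1 - p.2.1 + p.2.2 = n ∧ p.1 ≠ n ∧ p.2.2 ≠ n then
          b p.1 * (starRingEnd ℂ) (b p.2.1) * b p.2.2 *
            Complex.exp (Complex.I * ((omega4 p.1 p.2.1 p.2.2 n : ℤ) : ℂ) * (t : ℂ))
        else 0)‖ ≤ M ^ 3 :=
    le_trans (norm_tsum_le_tsum_norm hterm_summ)
      (le_trans (Summable.tsum_le_tsum hterm_le hterm_summ hΦsum) hΦt)
  linarith
set_option maxHeartbeats 2000000 in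
/-- If `S ⊆ ℤ²` is closed under `(n1,n2,n3) ↦ n1 − n2 + n3` and `a`
is a solution of FNLS on an interval `I ∋ 0` with initial data supported in `S`, then
`a(t)` is supported in `S` for all `t ∈ I`. -/
theorem fnls_support_preserved
    (S : Set Z2) (hS : ∀ n1 n2 n3 : Z2, n1 ∈ S → n2 ∈ S → n3 ∈ S → n1 - n2 + n3 ∈ S)
    (I : Set ℝ) (hI : I.OrdConnected) (h0I : (0 : ℝ) ∈ I)
    (a : ℝ → Z2 → ℂ) (ha : IsFNLSSolution I a)
    (hinit : ∀ n : Z2, n ∉ S → a 0 n = 0) :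
    ∀ t ∈ I, ∀ n : Z2, n ∉ S → a t n = 0 := by
  classical
  obtain ⟨hsum, hbdd, hderiv⟩ := ha
  intro t ht n₀ hn₀
  have hu : min 0 t ∈ I := by
    rcases le_total 0 t with h | h
    · rwa [min_eq_left h]
    · rwa [min_eq_right h]
  have hv : max 0 t ∈ I := by
    rcases le_total 0 t with h | h
    · rwa [max_eq_right h]
    · rwa [max_eq_left h]
  set K : Set ℝ := Set.Icc (min 0 t) (max 0 t) with hKdef
  have hKI : K ⊆ I := hI.out hu hv
  have hKmeas : MeasurableSet K := measurableSet_Icc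
  have htK : t ∈ K := ⟨min_le_right _ _, le_max_right _ _⟩
  obtain ⟨C, hC⟩ := hbdd (min 0 t) hu (max 0 t) hv
  set M : ℝ := max C 1 with hMdef
  have hM1 : (0:ℝ) < M := lt_of_lt_of_le one_pos (le_max_right _ _)
  have hMK : ∀ s ∈ K, (∑' n : Z2, ‖a s n‖) ≤ M := fun s hs =>
    le_trans (hC s ⟨hs, hKI hs⟩) (le_max_left _ _)
  have hsummK : ∀ s ∈ K, Summable fun n : Z2 => ‖a s n‖ := fun s hs => hsum s (hKI hs)
  have hcont : ∀ n : Z2, ContinuousOn (fun s => a s n) K := fun n s hs =>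
    ((hderiv n s (hKI hs)).continuousWithinAt).mono hKI
  set ind : ℝ → Z2 → ℝ := fun s => Set.indicator {m : Z2 | m ∉ S} (fun m => ‖a s m‖)
    with hinddef
  set F : ℝ → ℝ := fun s => ∑' n : Z2, ind s n with hFdef
  have hind0 : ∀ s n, 0 ≤ ind s n := fun s n =>
    Set.indicator_nonneg (fun m _ => norm_nonneg _) n
  have hind_le : ∀ s n, ind s n ≤ ‖a s n‖ := fun s n =>
    Set.indicator_le_self' (fun m _ => norm_nonneg _) n
  have hind_sum : ∀ s ∈ K, Summable (ind s) := fun s hs =>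
    Summable.of_nonneg_of_le (hind0 s) (hind_le s) (hsummK s hs)
  have hF0 : ∀ s, 0 ≤ F s := fun s => tsum_nonneg (hind0 s)
  have hFM : ∀ s ∈ K, F s ≤ M := fun s hs =>
    le_trans (Summable.tsum_le_tsum (hind_le s) (hind_sum s hs) (hsummK s hs)) (hMK s hs)
  set D : Z2 → ℝ → ℂ := fun n s => fnlsRHS (a s) n s with hDdef
  have hDle : ∀ (n : Z2), ∀ s ∈ K, ‖D n s‖ ≤ 2 * M ^ 3 := fun n s hs =>
    fnls_norm_bound (a s) (hsummK s hs) (hMK s hs) s n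
  -- measurability of D n on K
  have hDmeas : ∀ n : Z2,
      MeasureTheory.AEStronglyMeasurable (D n) (MeasureTheory.volume.restrict K) := by
    intro n
    have h1 : ContinuousOn (fun s => -((‖a s n‖ : ℂ) ^ 2) * a s n) K := by
      refine ContinuousOn.mul ?_ (hcont n)
      refine ContinuousOn.neg ?_
      refine ContinuousOn.pow ?_ 2
      exact Complex.continuous_ofReal.comp_continuousOn ((hcont n).norm)
    have h2 : MeasureTheory.AEStronglyMeasurable
        (fun s => ∑' p : Z2 × Z2 × Z2,
          (if p.1 - p.2.1 + p.2.2 = n ∧ p.1 ≠ n ∧ p.2.2 ≠ n then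
            a s p.1 * (starRingEnd ℂ) (a s p.2.1) * a s p.2.2 *
              Complex.exp (Complex.I * ((omega4 p.1 p.2.1 p.2.2 n : ℤ) : ℂ) * (s : ℂ))
          else 0)) (MeasureTheory.volume.restrict K) := by
      refine aesm_of_hasSum (Denumerable.eqv (Z2 × Z2 × Z2)).symm hKmeas
        (f := fun (p : Z2 × Z2 × Z2) (s : ℝ) =>
          (if p.1 - p.2.1 + p.2.2 = n ∧ p.1 ≠ n ∧ p.2.2 ≠ n then
            a s p.1 * (starRingEnd ℂ) (a s p.2.1) * a s p.2.2 *
              Complex.exp (Complex.I * ((omega4 p.1 p.2.1 p.2.2 n : ℤ) : ℂ) * (s : ℂ))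
          else 0)) (fun p => ?_) (fun s hs => ?_)
      · split_ifs with h
        · refine ContinuousOn.mul ?_ ?_
          · refine ContinuousOn.mul ?_ (hcont p.2.2)
            exact (hcont p.1).mul ((hcont p.2.1).star)
          · exact (Complex.continuous_exp.comp
              (continuous_const.mul Complex.continuous_ofReal)).continuousOn
        · exact continuousOn_const
      · exact (fnls_term_summable (a s) (hsummK s hs) s n).hasSum
    have hDeq : D n = fun s => Complex.I * ((-((‖a s n‖ : ℂ) ^ 2) * a s n) +
        ∑' p : Z2 × Z2 × Z2,
          (if p.1 - p.2.1 + p.2.2 = n ∧ p.1 ≠ n ∧ p.2.2 ≠ n then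
            a s p.1 * (starRingEnd ℂ) (a s p.2.1) * a s p.2.2 *
              Complex.exp (Complex.I * ((omega4 p.1 p.2.1 p.2.2 n : ℤ) : ℂ) * (s : ℂ))
          else 0)) := by
      funext s; rw [hDdef]
      rfl
    rw [hDeq]
    exact MeasureTheory.aestronglyMeasurable_const.mul
      (((h1.aestronglyMeasurable hKmeas)).add h2)
  have hvolK : MeasureTheory.volume K < ⊤ := by
    rw [hKdef]; exact measure_Icc_lt_top
  have hDint : ∀ n : Z2, MeasureTheory.IntegrableOn (D n) K := by
    intro n
    refine MeasureTheory.Integrable.mono' (g := fun _ => 2 * M ^ 3)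
      (MeasureTheory.integrableOn_const hvolK.ne) (hDmeas n) ?_
    filter_upwards [MeasureTheory.ae_restrict_mem hKmeas] with s hs using hDle n s hs
  -- measurability and integrability of F on K
  have hFmeas : MeasureTheory.AEStronglyMeasurable F (MeasureTheory.volume.restrict K) := by
    refine aesm_of_hasSum (Denumerable.eqv Z2).symm hKmeas (f := fun n s => ind s n)
      (fun n => ?_) (fun s hs => (hind_sum s hs).hasSum)
    by_cases h : n ∈ {m : Z2 | m ∉ S}
    · have he : (fun s => ind s n) = fun s => ‖a s n‖ := by
        funext s; rw [hinddef]; exact Set.indicator_of_mem h _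
      show ContinuousOn (fun s => ind s n) K
      rw [he]; exact (hcont n).norm
    · have he : (fun s => ind s n) = fun _ => (0:ℝ) := by
        funext s; rw [hinddef]; exact Set.indicator_of_notMem h _
      show ContinuousOn (fun s => ind s n) K
      rw [he]; exact continuousOn_const
  have hFint : MeasureTheory.IntegrableOn F K := by
    refine MeasureTheory.Integrable.mono' (g := fun _ => M)
      (MeasureTheory.integrableOn_const hvolK.ne) hFmeas ?_
    filter_upwards [MeasureTheory.ae_restrict_mem hKmeas] with s hs
    rw [Real.norm_eq_abs, _root_.abs_of_nonneg (hF0 s)]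
    exact hFM s hs
  -- the fundamental theorem of calculus inequality
  have hFTC : ∀ s ∈ K, ∀ n : Z2, ‖a s n - a 0 n‖ ≤ ∫ σ in Set.uIoc 0 s, ‖D n σ‖ := by
    intro s hs n
    rcases le_total 0 s with h0s | hs0
    · have hsub : Set.Icc (0:ℝ) s ⊆ K := Set.Icc_subset_Icc (min_le_left 0 t) hs.2
      have hint : IntervalIntegrable (D n) MeasureTheory.volume 0 s := by
        rw [intervalIntegrable_iff]
        refine (hDint n).mono_set ?_
        rw [Set.uIoc_of_le h0s]
        exact Set.Ioc_subset_Icc_self.trans hsub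
      have heq : ∫ σ in (0:ℝ)..s, D n σ = a s n - a 0 n := by
        refine intervalIntegral.integral_eq_sub_of_hasDeriv_right_of_le h0s
          ((hcont n).mono hsub) (fun σ hσ => ?_) hint
        have hIn : I ∈ nhds σ := mem_nhds_iff.mpr
          ⟨Set.Ioo 0 s, (Set.Ioo_subset_Icc_self.trans hsub).trans hKI, isOpen_Ioo, hσ⟩
        exact ((hderiv n σ (hKI (hsub (Set.Ioo_subset_Icc_self hσ)))).hasDerivAt
          hIn).hasDerivWithinAt
      calc ‖a s n - a 0 n‖ = ‖∫ σ in (0:ℝ)..s, D n σ‖ := by rw [heq]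
        _ ≤ ∫ σ in Set.uIoc 0 s, ‖D n σ‖ :=
          intervalIntegral.norm_integral_le_integral_norm_uIoc
    · have hsub : Set.Icc s (0:ℝ) ⊆ K := Set.Icc_subset_Icc hs.1 (le_max_left 0 t)
      have hint : IntervalIntegrable (D n) MeasureTheory.volume s 0 := by
        rw [intervalIntegrable_iff]
        refine (hDint n).mono_set ?_
        rw [Set.uIoc_of_le hs0]
        exact Set.Ioc_subset_Icc_self.trans hsub
      have heq : ∫ σ in s..(0:ℝ), D n σ = a 0 n - a s n := by
        refine intervalIntegral.integral_eq_sub_of_hasDeriv_right_of_le hs0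
          ((hcont n).mono hsub) (fun σ hσ => ?_) hint
        have hIn : I ∈ nhds σ := mem_nhds_iff.mpr
          ⟨Set.Ioo s 0, (Set.Ioo_subset_Icc_self.trans hsub).trans hKI, isOpen_Ioo, hσ⟩
        exact ((hderiv n σ (hKI (hsub (Set.Ioo_subset_Icc_self hσ)))).hasDerivAt
          hIn).hasDerivWithinAt
      calc ‖a s n - a 0 n‖ = ‖∫ σ in s..(0:ℝ), D n σ‖ := by rw [heq, norm_sub_rev]
        _ ≤ ∫ σ in Set.uIoc s 0, ‖D n σ‖ :=
          intervalIntegral.norm_integral_le_integral_norm_uIoc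
        _ = ∫ σ in Set.uIoc 0 s, ‖D n σ‖ := by rw [Set.uIoc_comm]
  have hsubIoc : ∀ s ∈ K, Set.uIoc 0 s ⊆ K := by
    intro s hs
    rcases le_total 0 s with h | h
    · rw [Set.uIoc_of_le h]
      exact Set.Ioc_subset_Icc_self.trans (Set.Icc_subset_Icc (min_le_left 0 t) hs.2)
    · rw [Set.uIoc_comm, Set.uIoc_of_le h]
      exact Set.Ioc_subset_Icc_self.trans (Set.Icc_subset_Icc hs.1 (le_max_left 0 t))
  -- the Gronwall-type integral inequality
  have hFineq : ∀ s ∈ K, F s ≤ ∫ σ in Set.uIoc 0 s, 4 * M ^ 2 * F σ := by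
    intro s hs
    have hsub := hsubIoc s hs
    refine Summable.tsum_le_of_sum_le (hind_sum s hs) ?_
    intro B
    have hBA : ∑ n ∈ B, ind s n = ∑ n ∈ B.filter (fun n => n ∉ S), ‖a s n‖ := by
      rw [Finset.sum_filter]
      refine Finset.sum_congr rfl fun n _ => ?_
      show ind s n = _
      by_cases h : n ∉ S
      · rw [if_pos h]
        exact Set.indicator_of_mem (show n ∈ {m : Z2 | m ∉ S} from h) _
      · rw [if_neg h]
        exact Set.indicator_of_notMem (show n ∉ {m : Z2 | m ∉ S} from h) _
    set A := B.filter (fun n => n ∉ S) with hAdef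
    have hA : ∀ n ∈ A, n ∉ S := fun n hn => (Finset.mem_filter.mp hn).2
    rw [hBA]
    have step1 : ∀ n ∈ A, ‖a s n‖ ≤ ∫ σ in Set.uIoc 0 s, ‖D n σ‖ := by
      intro n hn
      have h := hFTC s hs n
      rwa [hinit n (hA n hn), sub_zero] at h
    have hDnormint : ∀ n : Z2,
        MeasureTheory.IntegrableOn (fun σ => ‖D n σ‖) (Set.uIoc 0 s) :=
      fun n => ((hDint n).mono_set hsub).norm
    calc ∑ n ∈ A, ‖a s n‖ ≤ ∑ n ∈ A, ∫ σ in Set.uIoc 0 s, ‖D n σ‖ :=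
          Finset.sum_le_sum step1
      _ = ∫ σ in Set.uIoc 0 s, ∑ n ∈ A, ‖D n σ‖ :=
          (MeasureTheory.integral_finset_sum A (fun n _ => hDnormint n)).symm
      _ ≤ ∫ σ in Set.uIoc 0 s, 4 * M ^ 2 * F σ := by
          refine MeasureTheory.setIntegral_mono_on
            (MeasureTheory.integrable_finset_sum A (fun n _ => hDnormint n))
            ((hFint.mono_set hsub).const_mul _) measurableSet_uIoc ?_
          intro σ hσ
          have hσK := hsub hσ
          exact fnls_sum_bound S hS (a σ) (hsummK σ hσK) (hMK σ hσK) σ A hA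
  -- iteration
  have hiter : ∀ k : ℕ, ∀ s ∈ K,
      F s ≤ M * (4 * M ^ 2) ^ k * |s| ^ k / (Nat.factorial k) := by
    intro k
    induction k with
    | zero => intro s hs; simpa using hFM s hs
    | succ k ih =>
      intro s hs
      have hsub := hsubIoc s hs
      set c : ℝ := 4 * M ^ 2 * (M * (4 * M ^ 2) ^ k / (Nat.factorial k)) with hcdef
      have hkfac : (0:ℝ) < (Nat.factorial k : ℝ) := by
        exact_mod_cast Nat.factorial_pos k
      have hc0 : 0 ≤ c := by positivity
      have hpoint : ∀ σ ∈ Set.uIoc 0 s, 4 * M ^ 2 * F σ ≤ c * |σ| ^ k := by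
        intro σ hσ
        calc 4 * M ^ 2 * F σ ≤ 4 * M ^ 2 * (M * (4 * M ^ 2) ^ k * |σ| ^ k / (Nat.factorial k)) :=
              mul_le_mul_of_nonneg_left (ih σ (hsub hσ)) (by positivity)
          _ = c * |σ| ^ k := by rw [hcdef]; ring
      have hint2 : MeasureTheory.IntegrableOn (fun σ => c * |σ| ^ k) (Set.uIoc 0 s) := by
        refine Continuous.integrableOn_uIoc ?_
        exact continuous_const.mul ((continuous_abs.pow k))
      have habs : ∫ σ in Set.uIoc 0 s, |σ| ^ k = |s| ^ (k + 1) / (k + 1) := by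
        rcases le_total 0 s with h | h
        · rw [Set.uIoc_of_le h, ← intervalIntegral.integral_of_le h]
          have heqon : Set.EqOn (fun σ : ℝ => |σ| ^ k) (fun σ : ℝ => σ ^ k) (Set.uIcc 0 s) := by
            intro σ hσ
            rw [Set.uIcc_of_le h] at hσ
            simp only
            rw [_root_.abs_of_nonneg hσ.1]
          rw [intervalIntegral.integral_congr heqon, integral_pow, _root_.abs_of_nonneg h]
          simp
        · rw [Set.uIoc_comm, Set.uIoc_of_le h, ← intervalIntegral.integral_of_le h]
          have heqon : Set.EqOn (fun σ : ℝ => |σ| ^ k) (fun σ : ℝ => (-σ) ^ k) (Set.uIcc s 0) := by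
            intro σ hσ
            rw [Set.uIcc_of_le h] at hσ
            simp only
            rw [_root_.abs_of_nonpos hσ.2]
          rw [intervalIntegral.integral_congr heqon,
            intervalIntegral.integral_comp_neg (fun x : ℝ => x ^ k)]
          rw [neg_zero, integral_pow, _root_.abs_of_nonpos h]
          simp
      calc F s ≤ ∫ σ in Set.uIoc 0 s, 4 * M ^ 2 * F σ := hFineq s hs
        _ ≤ ∫ σ in Set.uIoc 0 s, c * |σ| ^ k :=
            MeasureTheory.setIntegral_mono_on ((hFint.mono_set hsub).const_mul _)
              hint2 measurableSet_uIoc hpoint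
        _ = c * ∫ σ in Set.uIoc 0 s, |σ| ^ k := MeasureTheory.integral_const_mul c _
        _ = c * (|s| ^ (k + 1) / (k + 1)) := by rw [habs]
        _ = M * (4 * M ^ 2) ^ (k + 1) * |s| ^ (k + 1) / (Nat.factorial (k + 1)) := by
            rw [hcdef, Nat.factorial_succ]
            push_cast
            field_simp
            ring
  -- conclusion
  have hFt : F t = 0 := by
    have hbound : ∀ k : ℕ, F t ≤ M * (4 * M ^ 2 * |t|) ^ k / (Nat.factorial k) := by
      intro k
      refine (hiter k t htK).trans (le_of_eq ?_)
      rw [mul_pow]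
      ring
    have hlim : Filter.Tendsto (fun k : ℕ => M * (4 * M ^ 2 * |t|) ^ k / (Nat.factorial k))
        Filter.atTop (nhds 0) := by
      have h := (FloorSemiring.tendsto_pow_div_factorial_atTop (K := ℝ)
        (4 * M ^ 2 * |t|)).const_mul M
      simpa [mul_div_assoc, mul_zero] using h
    exact le_antisymm (ge_of_tendsto' hlim hbound) (hF0 t)
  have hle : ‖a t n₀‖ ≤ F t := by
    have he : ind t n₀ = ‖a t n₀‖ :=
      Set.indicator_of_mem (show n₀ ∈ {m : Z2 | m ∉ S} from hn₀) _
    rw [← he]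
    exact Summable.le_tsum (hind_sum t htK) n₀ (fun m _ => hind0 t m)
  have : ‖a t n₀‖ = 0 := le_antisymm (hFt ▸ hle) (norm_nonneg _)
  exact norm_eq_zero.mp this

end
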